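/- Let f₁, ..., f_n : ℝ → ℝ be convex functions and u₁, ..., u_n ∈ ℝ, and define B(μ) = min_{1 ≤ t ≤ n} (u_t + ∑_{j=t+1}^{n} f_j(μ)) (with the empty sum equal to 0). Then there exists a finite partition of ℝ into intervals such that on each interval, B coincides with one of the functions μ ↦ u_t + ∑_{j=t+1}^{n} f_j(μ). -/

import Mathlib

/-- Branch function `b_t(μ) = u_t + ∑_{j=t+1}^{n} f_j(μ)` of a `𝓑_n` function. -/
noncomputable def branch (n : ℕ) (u : ℕ → ℝ) (f : ℕ → ℝ → ℝ) (t : ℕ) (μ : ℝ) : ℝ :=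
  u t + ∑ j ∈ Finset.Ioc t n, f j μ

/-- Split `ℝ` into a convex set `C`, the part of its complement below it,
and the rest of the complement. -/
def partOf (C : Set ℝ) : Fin 3 → Set ℝ
  | 0 => C
  | 1 => Cᶜ ∩ {x | ∀ y ∈ C, x ≤ y}
  | 2 => Cᶜ ∩ {x | ∃ y ∈ C, y < x}

lemma partOf_cover (C : Set ℝ) (x : ℝ) : ∃ i, x ∈ partOf C i := by
  by_cases hx : x ∈ C
  · exact ⟨0, hx⟩
  by_cases hle : ∀ y ∈ C, x ≤ y
  · exact ⟨1, hx, hle⟩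
  · push_neg at hle
    obtain ⟨y, hy, hyx⟩ := hle
    exact ⟨2, hx, y, hy, hyx⟩

lemma partOf_mem_zero {C : Set ℝ} {x : ℝ} {i : Fin 3} (hx : x ∈ partOf C i) :
    x ∈ C ↔ i = 0 := by
  fin_cases i
  · exact iff_of_true hx rfl
  · simp only [partOf] at hx
    constructor
    · exact fun h => absurd h hx.1
    · intro h; simp at h
  · simp only [partOf] at hx
    constructor
    · exact fun h => absurd h hx.1
    · intro h; simp at h

lemma partOf_disjoint {C : Set ℝ} {x : ℝ} {i j : Fin 3} (hi : x ∈ partOf C i)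
    (hj : x ∈ partOf C j) : i = j := by
  fin_cases i <;> fin_cases j <;> simp only [partOf] at hi hj <;> try rfl
  · exact absurd hi hj.1
  · exact absurd hi hj.1
  · exact absurd hj hi.1
  · obtain ⟨y, hy, hyx⟩ := hj.2
    exact absurd (hi.2 y hy) (not_le.mpr hyx)
  · exact absurd hj hi.1
  · obtain ⟨y, hy, hyx⟩ := hi.2
    exact absurd (hj.2 y hy) (not_le.mpr hyx)

lemma partOf_convex {C : Set ℝ} (hC : Convex ℝ C) (i : Fin 3) :
    Convex ℝ (partOf C i) := by
  have hOC : C.OrdConnected := hC.ordConnected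
  fin_cases i
  · exact hC
  · rw [convex_iff_ordConnected]
    constructor
    intro x hx z hz w hw
    refine ⟨fun hwC => ?_, fun y hy => le_trans hw.2 (hz.2 y hy)⟩
    have h1 : z ≤ w := hz.2 w hwC
    have h2 : w = z := le_antisymm hw.2 h1
    exact hz.1 (h2 ▸ hwC)
  · rw [convex_iff_ordConnected]
    constructor
    intro x hx z hz w hw
    obtain ⟨y, hyC, hyx⟩ := hx.2
    refine ⟨fun hwC => ?_, y, hyC, lt_of_lt_of_le hyx hw.1⟩
    exact hx.1 (hOC.out hyC hwC ⟨le_of_lt hyx, hw.1⟩)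

lemma convexOn_branch_sum (f : ℕ → ℝ → ℝ) (hconv : ∀ j : ℕ, ConvexOn ℝ Set.univ (f j))
    (S : Finset ℕ) : ConvexOn ℝ Set.univ (fun μ => ∑ j ∈ S, f j μ) := by
  classical
  induction S using Finset.cons_induction with
  | empty => simpa using convexOn_const (0 : ℝ) convex_univ
  | cons a s ha ih =>
    have h := (hconv a).add ih
    convert h using 1
    all_goals ext μ
    all_goals simp [Finset.sum_insert ha]

/-- Every `B ∈ 𝓑_n` (a pointwise minimum of `n` telescoping branches with convex
increments) admits a finite partition of `ℝ` into intervals on each of which `B`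
coincides with a single branch. -/
theorem exists_decomposition (n : ℕ) (hn : 1 ≤ n) (u : ℕ → ℝ) (f : ℕ → ℝ → ℝ)
    (hconv : ∀ j : ℕ, ConvexOn ℝ Set.univ (f j)) :
    ∃ P : Finset (Set ℝ),
      (∀ I ∈ P, Convex ℝ I) ∧
      ((↑P : Set (Set ℝ)).PairwiseDisjoint id) ∧
      ⋃₀ (↑P : Set (Set ℝ)) = Set.univ ∧
      ∀ I ∈ P, ∃ t : ℕ, 1 ≤ t ∧ t ≤ n ∧ ∀ μ ∈ I,
        sInf {x : ℝ | ∃ s : ℕ, 1 ≤ s ∧ s ≤ n ∧ x = branch n u f s μ} =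
          branch n u f t μ := by
  classical
  set b : ℕ → ℝ → ℝ := branch n u f with hb
  set K : Finset ℕ := Finset.Icc 1 n with hK
  set pr : Finset (ℕ × ℕ) := (K ×ˢ K).filter (fun p => p.1 < p.2) with hpr
  set D : ℕ × ℕ → Set ℝ := fun p => {μ | b p.1 μ < b p.2 μ} with hD
  -- convexity of each D p for p ∈ pr
  have hDconv : ∀ p ∈ pr, Convex ℝ (D p) := by
    rintro ⟨s, t⟩ hp
    simp only [hpr, Finset.mem_filter, Finset.mem_product, hK, Finset.mem_Icc] at hp
    obtain ⟨⟨⟨hs1, hsn⟩, ht1, htn⟩, hst⟩ := hp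
    have hsum : ∀ μ : ℝ, b s μ - b t μ =
        (u s - u t) + ∑ j ∈ Finset.Ioc s t, f j μ := by
      intro μ
      have := Finset.sum_Ioc_consecutive (fun j => f j μ) (le_of_lt hst) htn
      simp only [hb, branch]
      linarith [this]
    have hg : ConvexOn ℝ Set.univ (fun μ => (u s - u t) + ∑ j ∈ Finset.Ioc s t, f j μ) :=
      (convexOn_const _ convex_univ).add (convexOn_branch_sum f hconv _)
    have heq : D (s, t) = {μ ∈ Set.univ |
        (u s - u t) + ∑ j ∈ Finset.Ioc s t, f j μ < 0} := by
      ext μ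
      simp only [hD, Set.mem_setOf_eq, Set.mem_univ, true_and, Set.sep_univ]
      constructor
      · intro h; have := hsum μ; linarith
      · intro h; have := hsum μ; linarith
    rw [heq]
    exact hg.convex_lt 0
  -- cells
  have : Fintype (↥pr) := FinsetCoe.fintype pr
  set cell : (↥pr → Fin 3) → Set ℝ := fun σ => ⋂ p : ↥pr, partOf (D p) (σ p) with hcell
  refine ⟨Finset.image cell Finset.univ, ?_, ?_, ?_, ?_⟩
  · -- convexity
    intro I hI
    obtain ⟨σ, -, rfl⟩ := Finset.mem_image.mp hI
    exact convex_iInter fun p => partOf_convex (hDconv p p.2) (σ p)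
  · -- pairwise disjoint
    intro I hI J hJ hne
    simp only [Finset.coe_image, Set.mem_image] at hI hJ
    obtain ⟨σ, -, rfl⟩ := hI
    obtain ⟨τ, -, rfl⟩ := hJ
    simp only [Function.onFun, id]
    rw [Set.disjoint_left]
    intro x hxI hxJ
    apply hne
    have : σ = τ := by
      funext p
      exact partOf_disjoint (Set.mem_iInter.mp hxI p) (Set.mem_iInter.mp hxJ p)
    rw [this]
  · -- cover
    ext x
    simp only [Set.mem_sUnion, Finset.coe_image, Set.mem_image, Set.mem_univ, iff_true]
    choose g hg using fun p : ↥pr => partOf_cover (D p) x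
    exact ⟨cell g, ⟨g, Finset.mem_univ g, rfl⟩, Set.mem_iInter.mpr hg⟩
  · -- main property
    intro I hI
    obtain ⟨σ, -, rfl⟩ := Finset.mem_image.mp hI
    by_cases hne : (cell σ).Nonempty
    · obtain ⟨μ0, hμ0⟩ := hne
      -- argmin set at μ0
      set T : Finset ℕ := K.filter (fun s => ∀ r ∈ K, b s μ0 ≤ b r μ0) with hT
      have hKne : (1 : ℕ) ∈ K := by simp [hK, hn]
      have hTne : T.Nonempty := by
        obtain ⟨t, htK, htmin⟩ := Finset.exists_min_image K (fun s => b s μ0) ⟨1, hKne⟩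
        exact ⟨t, Finset.mem_filter.mpr ⟨htK, htmin⟩⟩
      set t : ℕ := T.max' hTne with htdef
      have htT : t ∈ T := T.max'_mem hTne
      have htK : t ∈ K := (Finset.mem_filter.mp htT).1
      have htmin : ∀ r ∈ K, b t μ0 ≤ b r μ0 := (Finset.mem_filter.mp htT).2
      have htmax : ∀ s ∈ K, t < s → b t μ0 < b s μ0 := by
        intro s hsK hts
        by_contra h
        push_neg at h
        have hsT : s ∈ T := Finset.mem_filter.mpr ⟨hsK, fun r hr => le_trans h (htmin r hr)⟩
        exact absurd (T.le_max' s hsT) (not_le.mpr hts)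
      obtain ⟨ht1, htn⟩ := Finset.mem_Icc.mp htK
      -- key: t is an argmin throughout the cell
      have key : ∀ μ ∈ cell σ, ∀ s ∈ K, b t μ ≤ b s μ := by
        intro μ hμ s hsK
        obtain ⟨hs1, hsn⟩ := Finset.mem_Icc.mp hsK
        rcases lt_trichotomy s t with hst | hst | hst
        · -- s < t : μ0 ∉ D (s,t), hence μ ∉ D (s,t)
          have hpmem : (s, t) ∈ pr := by
            simp [hpr, hK, Finset.mem_Icc, hs1, hsn, ht1, htn, hst]
          have hμ0p := Set.mem_iInter.mp hμ0 ⟨(s, t), hpmem⟩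
          have hμp := Set.mem_iInter.mp hμ ⟨(s, t), hpmem⟩
          have hμ0D : μ0 ∉ D (s, t) := by
            simp only [hD, Set.mem_setOf_eq, not_lt]
            exact htmin s hsK
          have hσ : σ ⟨(s, t), hpmem⟩ ≠ 0 := by
            intro h
            exact hμ0D ((partOf_mem_zero hμ0p).mpr h)
          have : μ ∉ D (s, t) := fun h => hσ ((partOf_mem_zero hμp).mp h)
          simpa only [hD, Set.mem_setOf_eq, not_lt] using this
        · exact le_of_eq (by rw [hst])
        · -- t < s : μ0 ∈ D (t,s), hence μ ∈ D (t,s)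
          have hpmem : (t, s) ∈ pr := by
            simp [hpr, hK, Finset.mem_Icc, hs1, hsn, ht1, htn, hst]
          have hμ0p := Set.mem_iInter.mp hμ0 ⟨(t, s), hpmem⟩
          have hμp := Set.mem_iInter.mp hμ ⟨(t, s), hpmem⟩
          have hμ0D : μ0 ∈ D (t, s) := htmax s hsK hst
          have hσ : σ ⟨(t, s), hpmem⟩ = 0 := (partOf_mem_zero hμ0p).mp hμ0D
          have : μ ∈ D (t, s) := (partOf_mem_zero hμp).mpr hσ
          exact le_of_lt this
      refine ⟨t, ht1, htn, fun μ hμ => ?_⟩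
      apply IsLeast.csInf_eq
      constructor
      · exact ⟨t, ht1, htn, rfl⟩
      · rintro x ⟨s, hs1, hsn, rfl⟩
        exact key μ hμ s (Finset.mem_Icc.mpr ⟨hs1, hsn⟩)
    · refine ⟨1, le_refl 1, hn, fun μ hμ => absurd ⟨μ, hμ⟩ hne⟩
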